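/- Let d ≥ 1 be an integer, z ≥ 1 a real number, k ≥ 1 an integer, and ε ∈ (0, 0.1). Let X ⊆ ℝ^d be a finite set, let Γ ⊆ ℝ^d be a linear subspace, and let π : ℝ^d → Γ denote the orthogonal projection onto Γ. For a nonempty finite set C ⊆ ℝ^d, define q(C) := Σ_{x ∈ X} ( min_{c ∈ C} ‖π(x) − c‖₂² + ‖x − π(x)‖₂² )^{z/2}. Assume that for every set C ⊆ ℝ^d with |C| = k, (1 − ε)·cost_z(X, C) ≤ q(C) ≤ (1 + ε)·cost_z(X, C). Let C₁ = {c_1, …, c_k} and C₂ = {c'_1, …, c'_k} be two sets of k points in ℝ^d such that for every i ∈ [k], π(c_i) = π(c'_i) and ‖c_i − π(c_i)‖₂ = ‖c'_i − π(c'_i)‖₂. Then cost_z(X, C₁) ≤ ((1 + ε)/(1 − ε)) · cost_z(X, C₂). -/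

import Mathlib

open scoped Classical
open Finset

/-- `dz z x C` is d_z(x, C) = min_{c ∈ C} ‖x − c‖₂^z (and 0 if C is empty). -/
noncomputable def dz {d : ℕ} (z : ℝ) (x : EuclideanSpace ℝ (Fin d))
    (C : Finset (EuclideanSpace ℝ (Fin d))) : ℝ :=
  if h : C.Nonempty then C.inf' h (fun c => ‖x - c‖ ^ z) else 0

/-- `costz z U C` is cost_z(U, C) = Σ_{x ∈ U} d_z(x, C). -/
noncomputable def costz {d : ℕ} (z : ℝ) (U C : Finset (EuclideanSpace ℝ (Fin d))) : ℝ :=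
  ∑ x ∈ U, dz z x C

/-- **Representativeness of equivalent center sets.** If for every k-point set C the
quantity q(C) = Σ_{x ∈ X} (min_{c ∈ C} ‖π(x) − c‖² + ‖x − π(x)‖²)^{z/2} is a
(1 ± ε)-approximation of cost_z(X, C), then for two k-point center sets C₁ = {c_i} and
C₂ = {c'_i} that are equivalent with respect to Γ (matching projections and matching
distances to Γ), cost_z(X, C₁) ≤ ((1 + ε)/(1 − ε)) · cost_z(X, C₂). -/
theorem equivalent_center_sets_cost (d : ℕ) (hd : 1 ≤ d) (z : ℝ) (hz : 1 ≤ z)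
    (k : ℕ) (hk : 1 ≤ k) (ε : ℝ) (hε : ε ∈ Set.Ioo (0 : ℝ) 0.1)
    (X : Finset (EuclideanSpace ℝ (Fin d)))
    (Γ : Submodule ℝ (EuclideanSpace ℝ (Fin d)))
    (hq : ∀ C : Finset (EuclideanSpace ℝ (Fin d)), ∀ hC : C.Nonempty, C.card = k →
      (1 - ε) * costz z X C ≤
        (∑ x ∈ X, (C.inf' hC (fun cc =>
            ‖(Submodule.orthogonalProjectionOnto Γ x : EuclideanSpace ℝ (Fin d)) - cc‖ ^ 2) +
          ‖x - (Submodule.orthogonalProjectionOnto Γ x : EuclideanSpace ℝ (Fin d))‖ ^ 2) ^ (z / 2)) ∧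
      (∑ x ∈ X, (C.inf' hC (fun cc =>
            ‖(Submodule.orthogonalProjectionOnto Γ x : EuclideanSpace ℝ (Fin d)) - cc‖ ^ 2) +
          ‖x - (Submodule.orthogonalProjectionOnto Γ x : EuclideanSpace ℝ (Fin d))‖ ^ 2) ^ (z / 2)) ≤
        (1 + ε) * costz z X C)
    (c c' : Fin k → EuclideanSpace ℝ (Fin d))
    (hc : Function.Injective c) (hc' : Function.Injective c')
    (hproj : ∀ i, Submodule.orthogonalProjectionOnto Γ (c i) = Submodule.orthogonalProjectionOnto Γ (c' i))
    (hheight : ∀ i,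
      ‖c i - (Submodule.orthogonalProjectionOnto Γ (c i) : EuclideanSpace ℝ (Fin d))‖ =
        ‖c' i - (Submodule.orthogonalProjectionOnto Γ (c' i) : EuclideanSpace ℝ (Fin d))‖) :
    costz z X (Finset.univ.image c) ≤
      ((1 + ε) / (1 - ε)) * costz z X (Finset.univ.image c') := by

  obtain ⟨hε0, hε1⟩ := hε
  have h1ε : (0:ℝ) < 1 - ε := by norm_num at hε1 ⊢; linarith
  have hkpos : 0 < k := hk
  have hne : (Finset.univ : Finset (Fin k)).Nonempty := ⟨⟨0, hkpos⟩, Finset.mem_univ _⟩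
  have hcard1 : (Finset.univ.image c).card = k := by
    rw [Finset.card_image_of_injective _ hc, Finset.card_univ, Fintype.card_fin]
  have hcard2 : (Finset.univ.image c').card = k := by
    rw [Finset.card_image_of_injective _ hc', Finset.card_univ, Fintype.card_fin]
  have key : ∀ (y : EuclideanSpace ℝ (Fin d)), y ∈ Γ → ∀ i,
      ‖y - c i‖^2 = ‖y - c' i‖^2 := by
    intro y hy i
    have aux : ∀ (w : EuclideanSpace ℝ (Fin d)),
        ‖y - w‖^2 = ‖y - (Submodule.orthogonalProjectionOnto Γ w : EuclideanSpace ℝ (Fin d))‖^2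
          + ‖w - (Submodule.orthogonalProjectionOnto Γ w : EuclideanSpace ℝ (Fin d))‖^2 := by
      intro w
      have hb : w - (Submodule.orthogonalProjectionOnto Γ w : EuclideanSpace ℝ (Fin d)) ∈ Γᗮ :=
        Γ.sub_starProjection_mem_orthogonal w
      have ha : y - (Submodule.orthogonalProjectionOnto Γ w : EuclideanSpace ℝ (Fin d)) ∈ Γ :=
        Submodule.sub_mem _ hy (Submodule.orthogonalProjectionOnto Γ w).2
      have hinner : inner ℝ (y - (Submodule.orthogonalProjectionOnto Γ w : EuclideanSpace ℝ (Fin d)))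
          (w - (Submodule.orthogonalProjectionOnto Γ w : EuclideanSpace ℝ (Fin d))) = (0:ℝ) :=
        Submodule.inner_right_of_mem_orthogonal ha hb
      have heq : y - w = (y - (Submodule.orthogonalProjectionOnto Γ w : EuclideanSpace ℝ (Fin d)))
          - (w - (Submodule.orthogonalProjectionOnto Γ w : EuclideanSpace ℝ (Fin d))) := by abel
      rw [heq, norm_sub_sq_real, hinner]
      ring
    rw [aux (c i), aux (c' i), hheight i, hproj i]
  have hinf : ∀ x : EuclideanSpace ℝ (Fin d),
      ((Finset.univ.image c).inf' (hne.image c) (fun cc =>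
          ‖(Submodule.orthogonalProjectionOnto Γ x : EuclideanSpace ℝ (Fin d)) - cc‖ ^ 2))
    = ((Finset.univ.image c').inf' (hne.image c') (fun cc =>
          ‖(Submodule.orthogonalProjectionOnto Γ x : EuclideanSpace ℝ (Fin d)) - cc‖ ^ 2)) := by
    intro x
    rw [Finset.inf'_image, Finset.inf'_image]
    exact Finset.inf'_congr _ rfl (fun i _ =>
      key _ (Submodule.orthogonalProjectionOnto Γ x).2 i)
  have hq1 := (hq (Finset.univ.image c) (hne.image c) hcard1).1
  have hq2 := (hq (Finset.univ.image c') (hne.image c') hcard2).2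
  have hsum : (∑ x ∈ X, ((Finset.univ.image c).inf' (hne.image c) (fun cc =>
          ‖(Submodule.orthogonalProjectionOnto Γ x : EuclideanSpace ℝ (Fin d)) - cc‖ ^ 2) +
        ‖x - (Submodule.orthogonalProjectionOnto Γ x : EuclideanSpace ℝ (Fin d))‖ ^ 2) ^ (z / 2))
      = (∑ x ∈ X, ((Finset.univ.image c').inf' (hne.image c') (fun cc =>
          ‖(Submodule.orthogonalProjectionOnto Γ x : EuclideanSpace ℝ (Fin d)) - cc‖ ^ 2) +
        ‖x - (Submodule.orthogonalProjectionOnto Γ x : EuclideanSpace ℝ (Fin d))‖ ^ 2) ^ (z / 2)) :=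
    Finset.sum_congr rfl fun x _ => by rw [hinf x]
  have hmain : (1 - ε) * costz z X (Finset.univ.image c) ≤
      (1 + ε) * costz z X (Finset.univ.image c') := by
    calc (1 - ε) * costz z X (Finset.univ.image c) ≤ _ := hq1
    _ = _ := hsum
    _ ≤ _ := hq2
  rw [div_mul_eq_mul_div, le_div_iff₀ h1ε]
  nlinarith [hmain]
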